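/- Let λ > 0, C ∈ ℝ, Φ(z) = λ(z + z³/3), and p(z) = C e^{−Φ(z)} ∫_{−∞}^z e^{Φ(t)} dt. Then p is twice differentiable and satisfies the stationary Fokker–Planck equation (1/λ)·p''(z) + d/dz((1 + z²) p(z)) = 0 for all z ∈ ℝ; with λ = 2ω³/σ² this is (σ²/(2ω³)) p'' + ((1 + z²) p)' = 0. -/

import Mathlib

open MeasureTheory Set Real

theorem stmt_13 (lam : ℝ) (C : ℝ) (hlam : 0 < lam)
    (Φ p : ℝ → ℝ)
    (hΦ : ∀ z, Φ z = lam * (z + z ^ 3 / 3))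
    (hp : ∀ z, p z = C * Real.exp (-Φ z) * ∫ t in Set.Iic z, Real.exp (Φ t)) :
    Differentiable ℝ p ∧ Differentiable ℝ (deriv p) ∧
    (∀ z : ℝ, (1 / lam) * deriv (deriv p) z
        + deriv (fun y => (1 + y ^ 2) * p y) z = 0) ∧
    (∀ ω σ : ℝ, σ ≠ 0 → lam = 2 * ω ^ 3 / σ ^ 2 →
      ∀ z : ℝ, σ ^ 2 / (2 * ω ^ 3) * deriv (deriv p) z
        + deriv (fun y => (1 + y ^ 2) * p y) z = 0) := by
  have hΦc : Continuous Φ := by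
    have : Φ = fun z => lam * (z + z ^ 3 / 3) := funext hΦ
    rw [this]; fun_prop
  set g : ℝ → ℝ := fun t => Real.exp (Φ t) with hgdef
  have hgc : Continuous g := Real.continuous_exp.comp hΦc
  -- integrability of g on Iic c
  have hexpint : ∀ c : ℝ, IntegrableOn (fun t : ℝ => Real.exp (lam * t)) (Set.Iic c) := by
    intro c
    have A : MeasurableEmbedding (fun x : ℝ => -x) := measurableEmbedding_neg
    have h2 : IntegrableOn (fun x : ℝ => Real.exp (-lam * x)) (Set.Ioi (-c)) :=
      exp_neg_integrableOn_Ioi _ hlam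
    have h3 : IntegrableOn (fun x : ℝ => Real.exp (lam * x)) (Set.Iio c) := by
      have := (MeasurableEmbedding.integrableOn_map_iff A
        (f := fun x : ℝ => Real.exp (-lam * x)) (s := Set.Ioi (-c)) (μ := volume)).1
      rw [Measure.map_neg_eq_self (volume : Measure ℝ)] at this
      have h4 := this h2
      have hs : (fun x : ℝ => -x) ⁻¹' Set.Ioi (-c) = Set.Iio c := by
        ext x; simp
      rw [hs] at h4
      refine h4.congr_fun ?_ measurableSet_Iio
      intro x _; simp [Function.comp]
    rwa [integrableOn_Iic_iff_integrableOn_Iio]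
  have hint : ∀ c : ℝ, IntegrableOn g (Set.Iic c) := by
    intro c
    refine Integrable.mono' (((hexpint c).const_mul (Real.exp (lam * c ^ 3 / 3))))
      (hgc.aestronglyMeasurable.restrict) ?_
    filter_upwards [ae_restrict_mem measurableSet_Iic] with t ht
    have htc : t ≤ c := ht
    have hcube : t ^ 3 ≤ c ^ 3 := by nlinarith [sq_nonneg (t + c), sq_nonneg (t - c), sq_nonneg t, sq_nonneg c]
    have : Φ t ≤ lam * c ^ 3 / 3 + lam * t := by
      rw [hΦ t]; nlinarith
    calc ‖g t‖ = Real.exp (Φ t) := by simp [hgdef, abs_of_pos (Real.exp_pos _)]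
      _ ≤ Real.exp (lam * c ^ 3 / 3 + lam * t) := Real.exp_le_exp.2 this
      _ = Real.exp (lam * c ^ 3 / 3) * Real.exp (lam * t) := Real.exp_add _ _
  set F : ℝ → ℝ := fun z => ∫ t in Set.Iic z, g t with hFdef
  have hF : ∀ z, HasDerivAt F (g z) z := by
    intro z
    have heq : F = fun y => F 0 + ∫ t in (0:ℝ)..y, g t := by
      funext y
      rw [← intervalIntegral.integral_Iic_sub_Iic (hint 0) (hint y)]
      ring
    have hd : HasDerivAt (fun y => ∫ t in (0:ℝ)..y, g t) (g z) z :=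
      (hgc.integral_hasStrictDerivAt 0 z).hasDerivAt
    rw [heq]
    exact hd.const_add (F 0)
  have hΦd : ∀ z : ℝ, HasDerivAt Φ (lam * (1 + z ^ 2)) z := by
    intro z
    have hΦfun : Φ = fun z => lam * (z + z ^ 3 / 3) := funext hΦ
    rw [hΦfun]
    have h1 : HasDerivAt (fun z : ℝ => z + z ^ 3 / 3) (1 + z ^ 2) z := by
      have := (hasDerivAt_id z).add ((hasDerivAt_pow 3 z).div_const 3)
      convert this using 1 <;> first | rfl | norm_num
    simpa [mul_add] using h1.const_mul lam
  have hpfun : p = fun z => C * Real.exp (-Φ z) * F z := funext hp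
  have hp'd : ∀ z : ℝ, HasDerivAt p (-(lam * (1 + z ^ 2)) * p z + C) z := by
    intro z
    rw [hpfun]
    have h1 : HasDerivAt (fun y => Real.exp (-Φ y)) (Real.exp (-Φ z) * (-(lam * (1 + z ^ 2)))) z :=
      (hΦd z).neg.exp
    have h2 := ((h1.const_mul C).mul (hF z))
    convert h2 using 1 <;> try rfl
    have hee : Real.exp (-Φ z) * g z = 1 := by
      simp [hgdef, ← Real.exp_add]
    have : C * Real.exp (-Φ z) * g z = C := by
      rw [mul_assoc, hee, mul_one]
    simp only [this]
    ring
  have hdiffp : Differentiable ℝ p := fun z => (hp'd z).differentiableAt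
  have hderivp : deriv p = fun z => -(lam * (1 + z ^ 2)) * p z + C :=
    funext fun z => (hp'd z).deriv
  have hD : ∀ z : ℝ, HasDerivAt (deriv p)
      (-(lam * (2 * z)) * p z + -(lam * (1 + z ^ 2)) * (-(lam * (1 + z ^ 2)) * p z + C)) z := by
    intro z
    rw [hderivp]
    have hq : HasDerivAt (fun y : ℝ => -(lam * (1 + y ^ 2))) (-(lam * (2 * z))) z := by
      have := ((hasDerivAt_pow 2 z).const_add 1).const_mul lam
      have h2 := this.neg
      convert h2 using 1 <;> first | rfl | norm_num
    exact (hq.mul (hp'd z)).add_const C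
  have hdiffp2 : Differentiable ℝ (deriv p) := fun z => (hD z).differentiableAt
  have hkey : ∀ z : ℝ, (1 / lam) * deriv (deriv p) z
      + deriv (fun y => (1 + y ^ 2) * p y) z = 0 := by
    intro z
    have h1 : deriv (deriv p) z =
        -(lam * (2 * z)) * p z + -(lam * (1 + z ^ 2)) * (-(lam * (1 + z ^ 2)) * p z + C) :=
      (hD z).deriv
    have h2 : deriv (fun y => (1 + y ^ 2) * p y) z
        = 2 * z * p z + (1 + z ^ 2) * (-(lam * (1 + z ^ 2)) * p z + C) := by
      have hq : HasDerivAt (fun y : ℝ => 1 + y ^ 2) (2 * z) z := by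
        have := (hasDerivAt_pow 2 z).const_add 1
        convert this using 1 <;> first | rfl | norm_num
      exact (hq.mul (hp'd z)).deriv
    rw [h1, h2]
    field_simp
    ring
  refine ⟨hdiffp, hdiffp2, hkey, ?_⟩
  intro ω σ hσ hl z
  have hω : ω ^ 3 ≠ 0 := by
    intro h
    rw [h] at hl
    simp at hl
    rw [hl] at hlam
    exact lt_irrefl 0 hlam
  have hσ2 : σ ^ 2 ≠ 0 := pow_ne_zero 2 hσ
  have : σ ^ 2 / (2 * ω ^ 3) = 1 / lam := by
    rw [hl]; field_simp
  rw [this]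
  exact hkey z
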